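/- (Growth of the phase under bounded μ.) Let η ∈ C²([0,∞)) satisfy η(0) ≥ 0, η′(t) > 0 and η″(t) > 0 for all t ≥ 0, and suppose μ₁ := sup_{t≥0} μ(t) < ∞, where μ(t) := max_{0≤τ≤t} 1/((1+τ)η″(τ)). Then for all t ≥ 0: η(t)/(1+t) ≥ ((1+t)log(1+t) − t + μ₁(η(0) + η′(0)t))/(μ₁(1+t)), and consequently η(t)/(1+t) → ∞ as t → ∞. -/

import Mathlib

open Set Filter

private lemma mono_aux (f f' : ℝ → ℝ)
    (hd : ∀ x ∈ Ici (0:ℝ), HasDerivAt f (f' x) x)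
    (h0 : ∀ x ∈ Ici (0:ℝ), 0 ≤ f' x) :
    ∀ t, 0 ≤ t → f 0 ≤ f t := by
  intro t ht
  have hmono : MonotoneOn f (Ici 0) := by
    apply monotoneOn_of_deriv_nonneg (convex_Ici 0)
    · exact fun x hx => (hd x hx).continuousAt.continuousWithinAt
    · intro x hx
      rw [interior_Ici] at hx
      exact (hd x (show (0:ℝ) ≤ x from hx.le)).differentiableAt.differentiableWithinAt
    · intro x hx
      rw [interior_Ici] at hx
      rw [(hd x (show (0:ℝ) ≤ x from hx.le)).deriv]
      exact h0 x (show (0:ℝ) ≤ x from hx.le)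
  exact hmono self_mem_Ici ht ht

/-- Growth of the phase under bounded μ. -/
theorem phase_growth_under_bounded_mu
    (η η' η'' μ : ℝ → ℝ) (μ₁ : ℝ)
    (hη0 : 0 ≤ η 0)
    (hηd : ∀ t, 0 ≤ t → HasDerivAt η (η' t) t)
    (hηd' : ∀ t, 0 ≤ t → HasDerivAt η' (η'' t) t)
    (hη'pos : ∀ t, 0 ≤ t → 0 < η' t)
    (hη''pos : ∀ t, 0 ≤ t → 0 < η'' t)
    (hμ : ∀ t, 0 ≤ t → IsGreatest ((fun τ => 1 / ((1 + τ) * η'' τ)) '' Icc 0 t) (μ t))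
    (hμ₁ : IsLUB (μ '' Ici 0) μ₁) :
    (∀ t, 0 ≤ t →
      ((1 + t) * Real.log (1 + t) - t + μ₁ * (η 0 + η' 0 * t)) / (μ₁ * (1 + t))
        ≤ η t / (1 + t)) ∧
    Tendsto (fun t => η t / (1 + t)) atTop atTop := by
  -- μ₁ > 0
  have hμ₁pos : 0 < μ₁ := by
    have h1 : (1:ℝ) / ((1 + 0) * η'' 0) ≤ μ 0 :=
      (hμ 0 le_rfl).2 ⟨0, by simp, rfl⟩
    have h2 : μ 0 ≤ μ₁ := hμ₁.1 ⟨0, self_mem_Ici, rfl⟩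
    have h3 : 0 < (1:ℝ) / ((1 + 0) * η'' 0) := by
      have := hη''pos 0 le_rfl
      positivity
    linarith
  -- lower bound on η''
  have hηlb : ∀ τ, 0 ≤ τ → 1 / (μ₁ * (1 + τ)) ≤ η'' τ := by
    intro τ hτ
    have h1 : (1:ℝ) / ((1 + τ) * η'' τ) ≤ μ τ :=
      (hμ τ hτ).2 ⟨τ, ⟨hτ, le_rfl⟩, rfl⟩
    have h2 : μ τ ≤ μ₁ := hμ₁.1 ⟨τ, hτ, rfl⟩
    have hE := hη''pos τ hτ
    have h1τ : (0:ℝ) < 1 + τ := by linarith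
    have hle : (1:ℝ) / ((1 + τ) * η'' τ) ≤ μ₁ := le_trans h1 h2
    rw [div_le_iff₀ (by positivity)] at hle
    rw [div_le_iff₀ (by positivity)]
    nlinarith
  -- derivative of log(1+s)
  have hlog : ∀ s : ℝ, 0 ≤ s →
      HasDerivAt (fun s : ℝ => Real.log (1 + s)) (1 / (1 + s)) s := by
    intro s hs
    have h := ((hasDerivAt_id s).const_add (1:ℝ)).log (by intro h; linarith : (1:ℝ) + s ≠ 0)
    simpa using h
  -- first comparison: η' t ≥ η' 0 + (1/μ₁) log(1+t)
  have key1 : ∀ t, 0 ≤ t → η' 0 + (1/μ₁) * Real.log (1 + t) ≤ η' t := by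
    have h := mono_aux (fun s => η' s - (1/μ₁) * Real.log (1 + s))
      (fun s => η'' s - (1/μ₁) * (1 / (1 + s)))
      (fun x hx => (hηd' x hx).sub ((hlog x hx).const_mul (1/μ₁)))
      (by
        intro x hx
        have h1x : (0:ℝ) < 1 + x := by simp at hx; linarith
        have hb := hηlb x hx
        have : (1/μ₁) * (1 / (1 + x)) = 1 / (μ₁ * (1 + x)) := by
          rw [div_mul_div_comm, one_mul]
        rw [sub_nonneg, this]
        exact hb)
    intro t ht
    have := h t ht
    simp only [Real.log_one, add_zero, mul_zero, sub_zero] at this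
    linarith
  -- second comparison
  have key2 : ∀ t, 0 ≤ t →
      η 0 + η' 0 * t + (1/μ₁) * ((1 + t) * Real.log (1 + t) - t) ≤ η t := by
    have h := mono_aux
      (fun s => η s - η' 0 * s - (1/μ₁) * ((1 + s) * Real.log (1 + s) - s))
      (fun s => η' s - η' 0 - (1/μ₁) * Real.log (1 + s))
      (by
        intro x hx
        have h1x : (0:ℝ) < 1 + x := by simp at hx; linarith
        have hP : HasDerivAt (fun s : ℝ => (1 + s) * Real.log (1 + s) - s)
            (Real.log (1 + x)) x := by
          have h1 := (((hasDerivAt_id x).const_add (1:ℝ)).mul (hlog x hx)).sub (hasDerivAt_id x)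
          exact h1.congr_deriv (by simp only [id]; rw [mul_one_div_cancel h1x.ne']; ring)
        have h2 := ((hηd x hx).sub ((hasDerivAt_id x).const_mul (η' 0))).sub
          (hP.const_mul (1/μ₁))
        exact h2.congr_deriv (by ring))
      (by
        intro x hx
        have := key1 x hx
        simp only [sub_nonneg]
        linarith)
    intro t ht
    have := h t ht
    simp only [Real.log_one, add_zero, mul_zero, sub_zero, zero_mul, mul_one] at this
    linarith
  constructor
  · intro t ht
    have h1t : (0:ℝ) < 1 + t := by linarith
    rw [div_le_div_iff₀ (by positivity) h1t]
    have key := key2 t ht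
    have keym : μ₁ * (η 0 + η' 0 * t) + ((1 + t) * Real.log (1 + t) - t) ≤ μ₁ * η t := by
      have h := mul_le_mul_of_nonneg_left key hμ₁pos.le
      have he : μ₁ * ((1/μ₁) * ((1 + t) * Real.log (1 + t) - t))
          = (1 + t) * Real.log (1 + t) - t := by
        field_simp
      nlinarith [h, he]
    nlinarith [mul_le_mul_of_nonneg_right keym h1t.le]
  · apply tendsto_atTop_mono' atTop
      (show ∀ᶠ t in atTop, (1/μ₁) * (Real.log (1 + t) - 1) ≤ η t / (1 + t) from ?_) ?_
    · filter_upwards [eventually_ge_atTop (0:ℝ)] with t ht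
      have h1t : (0:ℝ) < 1 + t := by linarith
      have key := key2 t ht
      rw [le_div_iff₀ h1t]
      have hA : (Real.log (1 + t) - 1) * (1 + t) ≤ (1 + t) * Real.log (1 + t) - t := by
        nlinarith
      have hB := mul_le_mul_of_nonneg_left hA (by positivity : (0:ℝ) ≤ 1/μ₁)
      have hη't : 0 ≤ η' 0 * t := mul_nonneg (hη'pos 0 le_rfl).le ht
      nlinarith [hB, key, hη0]
    · have hlogt : Tendsto (fun t : ℝ => Real.log (1 + t)) atTop atTop :=
        Real.tendsto_log_atTop.comp (tendsto_atTop_add_const_left atTop 1 tendsto_id)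
      have h1 : Tendsto (fun t : ℝ => Real.log (1 + t) - 1) atTop atTop :=
        tendsto_atTop_add_const_right atTop (-1) hlogt |>.congr (by intro x; ring)
      exact h1.const_mul_atTop (by positivity)
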